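/- arXiv:0903.3332 — 5 statements merged into one kernel-verified Lean document; each statement's English description precedes it below -/
import Mathlib

section
/- For any boundary point ζ of the unit ball, any interior point z, and any Möbius transformation g of the ball, one has j(g,ζ) ≥ ((1-|z|)^2/4) · j(g,z). Consequently, if the horospherical Poincaré series P(ζ,s) = Σ_{g∈G} j(g,ζ)^s of a Kleinian group G converges at some ζ ∈ S, then the ordinary Poincaré series P(z,s) = Σ_{g∈G} j(g,z)^s converges for every z in the ball. -/
open MeasureTheory Filter
open scoped RealInnerProductSpace ENNReal BigOperators Topology

noncomputable section

/-- The ambient Euclidean space `ℝ^{N+1}`; hyperbolic space is its open unit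
ball `𝔻` and the boundary sphere `𝕊` is the unit sphere. -/
abbrev Amb (N : ℕ) := EuclideanSpace ℝ (Fin (N + 1))

/-- The conformal derivative `j(g,z) = (1-|g⁻¹0|²)/(|z*-g⁻¹0|²|z|²)` of a ball
automorphism `g` at a point `z` of the closed unit ball, where `z* = z/|z|²`
denotes inversion of `z` in the unit sphere.  It is written here via the
identity `|z*-w|²|z|² = 1 - 2⟪z,w⟫ + |z|²|w|²` (valid for `z ≠ 0`), which also
gives the correct value `1-|g⁻¹0|²` at `z = 0`; for `|z| = 1` it reduces to
`(1-|g⁻¹0|²)/|z-g⁻¹0|²`. -/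
def cderiv {N : ℕ} (g : Equiv.Perm (Amb N)) (z : Amb N) : ℝ :=
  (1 - ‖g.symm 0‖ ^ 2) /
    (1 - 2 * (inner ℝ z (g.symm 0) : ℝ) + ‖z‖ ^ 2 * ‖g.symm 0‖ ^ 2)

/-- `g` is a Möbius transformation of the closed unit ball: a homeomorphic
bijection of the ambient space preserving the closed ball, the open ball and
the boundary sphere, which is conformal with conformal factor `cderiv g`
(the metric characterisation `|gx-gy|² = j(g,x)j(g,y)|x-y|²` of Möbius maps). -/
structure IsMobius {N : ℕ} (g : Equiv.Perm (Amb N)) : Prop where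
  maps_ball : ∀ z : Amb N, ‖z‖ ≤ 1 → ‖g z‖ ≤ 1
  maps_open : ∀ z : Amb N, ‖z‖ < 1 → ‖g z‖ < 1
  maps_sphere : ∀ z : Amb N, ‖z‖ = 1 → ‖g z‖ = 1
  symm_maps_ball : ∀ z : Amb N, ‖z‖ ≤ 1 → ‖g.symm z‖ ≤ 1
  symm_maps_open : ∀ z : Amb N, ‖z‖ < 1 → ‖g.symm z‖ < 1
  continuous : Continuous fun z : Amb N => g z
  continuous_symm : Continuous fun z : Amb N => g.symm z
  conf : ∀ x y : Amb N, ‖x‖ ≤ 1 → ‖y‖ ≤ 1 →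
    ‖g x - g y‖ ^ 2 = cderiv g x * cderiv g y * ‖x - y‖ ^ 2

lemma cderiv_facts {N : ℕ} (g : Equiv.Perm (Amb N)) (hg : IsMobius g)
    (z ζ : Amb N) (hz : ‖z‖ < 1) (hζ : ‖ζ‖ = 1) :
    0 < cderiv g z ∧ (1 - ‖z‖) ^ 2 / 4 * cderiv g z ≤ cderiv g ζ := by
  set w := g.symm 0 with hw
  have hw1 : ‖w‖ < 1 := hg.symm_maps_open 0 (by simp)
  have hw0 : (0:ℝ) ≤ ‖w‖ := norm_nonneg _
  have hz0 : (0:ℝ) ≤ ‖z‖ := norm_nonneg _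
  have hA : (0:ℝ) < 1 - ‖w‖ ^ 2 := by nlinarith
  have hiz : (inner ℝ z w : ℝ) ≤ ‖z‖ * ‖w‖ := real_inner_le_norm z w
  have hiζ : (inner ℝ ζ w : ℝ) ≤ ‖ζ‖ * ‖w‖ := real_inner_le_norm ζ w
  have hiζ' : -(‖ζ‖ * ‖w‖) ≤ (inner ℝ ζ w : ℝ) := neg_le_of_abs_le (abs_real_inner_le_norm ζ w)
  rw [hζ] at hiζ hiζ'
  have ht : ‖z‖ * ‖w‖ ≤ ‖z‖ := mul_le_of_le_one_right hz0 hw1.le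
  have hDz : (1 - ‖z‖) ^ 2 ≤ 1 - 2 * (inner ℝ z w : ℝ) + ‖z‖ ^ 2 * ‖w‖ ^ 2 := by
    nlinarith [mul_nonneg (sub_nonneg.2 ht)
      (show (0:ℝ) ≤ 2 - ‖z‖ - ‖z‖ * ‖w‖ by nlinarith)]
  have hDzpos : 0 < 1 - 2 * (inner ℝ z w : ℝ) + ‖z‖ ^ 2 * ‖w‖ ^ 2 := by
    have : (0:ℝ) < (1 - ‖z‖) ^ 2 := pow_pos (by linarith) 2
    linarith
  have hDζpos : 0 < 1 - 2 * (inner ℝ ζ w : ℝ) + ‖ζ‖ ^ 2 * ‖w‖ ^ 2 := by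
    rw [hζ]; nlinarith [sq_nonneg (1 - ‖w‖)]
  have hDζ4 : 1 - 2 * (inner ℝ ζ w : ℝ) + ‖ζ‖ ^ 2 * ‖w‖ ^ 2 ≤ 4 := by
    rw [hζ]; nlinarith
  constructor
  · exact div_pos hA hDzpos
  · rw [cderiv, cderiv, ← hw, div_mul_div_comm, div_le_div_iff₀ (mul_pos (by norm_num) hDzpos) hDζpos]
    nlinarith [mul_le_mul_of_nonneg_left hDζ4 hA.le,
      mul_le_mul_of_nonneg_left hDz hA.le, sq_nonneg (1 - ‖z‖),
      mul_le_mul_of_nonneg_right hDz (mul_nonneg hA.le hDζpos.le),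
      mul_le_mul_of_nonneg_right hDζ4 (mul_nonneg hA.le (le_trans (sq_nonneg (1 - ‖z‖)) hDz))]

set_option maxHeartbeats 1000000 in
/-- For a boundary point `ζ`, an interior point `z` and a
Möbius transformation `g` one has `j(g,ζ) ≥ ((1-|z|)²/4)·j(g,z)`; consequently,
if the horospherical Poincaré series `Σ_{g∈G} j(g,ζ)^s` of a Kleinian group `G`
converges at `ζ`, then the Poincaré series `Σ_{g∈G} j(g,z)^s` converges for
every `z` in the ball. -/
theorem stmt_2 {N : ℕ} (G : Subgroup (Equiv.Perm (Amb N)))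
    (hmob : ∀ g ∈ G, IsMobius g) (s : ℝ) (hs : 0 < s)
    (ζ : Amb N) (hζ : ‖ζ‖ = 1) :
    (∀ g : Equiv.Perm (Amb N), IsMobius g → ∀ z : Amb N, ‖z‖ < 1 →
      (1 - ‖z‖) ^ 2 / 4 * cderiv g z ≤ cderiv g ζ) ∧
    ((Summable fun g : G => cderiv (g : Equiv.Perm (Amb N)) ζ ^ s) →
      ∀ z : Amb N, ‖z‖ < 1 →
        Summable fun g : G => cderiv (g : Equiv.Perm (Amb N)) z ^ s) := by
  have key : ∀ g : Equiv.Perm (Amb N), IsMobius g → ∀ z : Amb N, ‖z‖ < 1 →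
      (1 - ‖z‖) ^ 2 / 4 * cderiv g z ≤ cderiv g ζ := fun g hg z hz =>
    (cderiv_facts g hg z ζ hz hζ).2
  refine ⟨key, fun hsum z hz => ?_⟩
  have hC : (0:ℝ) < (1 - ‖z‖) ^ 2 / 4 := div_pos (pow_pos (by linarith) 2) (by norm_num)
  have h0 : ∀ g : G, 0 ≤ cderiv (g : Equiv.Perm (Amb N)) z ^ s := fun g =>
    Real.rpow_nonneg (cderiv_facts _ (hmob g g.2) z ζ hz hζ).1.le s
  have hle : ∀ g : G, cderiv (g : Equiv.Perm (Amb N)) z ^ s ≤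
      ((1 - ‖z‖) ^ 2 / 4)⁻¹ ^ s * cderiv (g : Equiv.Perm (Amb N)) ζ ^ s := by
    intro g
    have h1 := (cderiv_facts _ (hmob g g.2) z ζ hz hζ).1
    have h2 := key _ (hmob g g.2) z hz
    have h3 : cderiv (g : Equiv.Perm (Amb N)) z ≤
        ((1 - ‖z‖) ^ 2 / 4)⁻¹ * cderiv (g : Equiv.Perm (Amb N)) ζ := by
      exact (le_inv_mul_iff₀ hC).2 h2
    calc cderiv (g : Equiv.Perm (Amb N)) z ^ s
        ≤ (((1 - ‖z‖) ^ 2 / 4)⁻¹ * cderiv (g : Equiv.Perm (Amb N)) ζ) ^ s :=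
          Real.rpow_le_rpow h1.le h3 hs.le
      _ = ((1 - ‖z‖) ^ 2 / 4)⁻¹ ^ s * cderiv (g : Equiv.Perm (Amb N)) ζ ^ s :=
          Real.mul_rpow (by positivity) (le_trans (mul_nonneg hC.le h1.le) h2)
  exact Summable.of_nonneg_of_le h0 hle (hsum.mul_left _)
end
end

section
/- Let G be a Kleinian group and ζ an ordinary point of G, i.e. there exists c > 0 with |ζ - g^{-1}(0)|^2 ≥ c for all g ∈ G. If (z_n) is a sequence in the unit ball converging to ζ and the horospherical Poincaré series P(ζ,s) converges, then lim_{n→∞} P(z_n,s) = P(ζ,s). -/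
open MeasureTheory Filter
open scoped RealInnerProductSpace ENNReal BigOperators Topology

noncomputable section

/-- If `ζ` is an ordinary point of the Kleinian group `G`
(`|ζ-g⁻¹(0)|² ≥ c > 0` for all `g ∈ G`), `(z_n)` is a sequence in the ball
converging to `ζ`, and the horospherical Poincaré series `P(ζ,s)` converges,
then `P(z_n,s) → P(ζ,s)`. -/
theorem stmt_5 {N : ℕ} (G : Subgroup (Equiv.Perm (Amb N)))
    (hmob : ∀ g ∈ G, IsMobius g) (s : ℝ) (hs : 0 < s)
    (ζ : Amb N) (hζ : ‖ζ‖ = 1) (c : ℝ) (hc : 0 < c)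
    (hord : ∀ g ∈ G, c ≤ ‖ζ - (Equiv.symm g) 0‖ ^ 2)
    (z : ℕ → Amb N) (hz : ∀ n, ‖z n‖ < 1)
    (hlim : Tendsto z atTop (𝓝 ζ))
    (hP : Summable fun g : G => cderiv (g : Equiv.Perm (Amb N)) ζ ^ s) :
    Tendsto (fun n => ∑' g : G, cderiv (g : Equiv.Perm (Amb N)) (z n) ^ s)
      atTop (𝓝 (∑' g : G, cderiv (g : Equiv.Perm (Amb N)) ζ ^ s)) := by
  classical
  have h01 : ‖(0 : Amb N)‖ < 1 := by simp
  have hw : ∀ g : G, ‖(g : Equiv.Perm (Amb N)).symm 0‖ < 1 :=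
    fun g => (hmob g g.2).symm_maps_open 0 h01
  -- denominator identity
  have hden : ∀ x y : Amb N,
      1 - 2 * (inner ℝ x y : ℝ) + ‖x‖ ^ 2 * ‖y‖ ^ 2
        = ‖x - y‖ ^ 2 + (1 - ‖x‖ ^ 2) * (1 - ‖y‖ ^ 2) := by
    intro x y
    rw [norm_sub_sq_real]; ring
  have hdζ : ∀ g : G,
      1 - 2 * (inner ℝ ζ ((g : Equiv.Perm (Amb N)).symm 0) : ℝ)
        + ‖ζ‖ ^ 2 * ‖(g : Equiv.Perm (Amb N)).symm 0‖ ^ 2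
        = ‖ζ - (g : Equiv.Perm (Amb N)).symm 0‖ ^ 2 := by
    intro g; rw [hden, hζ]; ring
  have hDζ_pos : ∀ g : G, (0 : ℝ) <
      1 - 2 * (inner ℝ ζ ((g : Equiv.Perm (Amb N)).symm 0) : ℝ)
        + ‖ζ‖ ^ 2 * ‖(g : Equiv.Perm (Amb N)).symm 0‖ ^ 2 := by
    intro g
    rw [hdζ g]
    exact lt_of_lt_of_le hc (hord g g.2)
  have hA_pos : ∀ g : G, (0 : ℝ) < 1 - ‖(g : Equiv.Perm (Amb N)).symm 0‖ ^ 2 := by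
    intro g
    have := hw g
    nlinarith [norm_nonneg ((g : Equiv.Perm (Amb N)).symm 0)]
  have hDz_pos : ∀ (g : G) (x : Amb N), ‖x‖ < 1 → (0 : ℝ) <
      1 - 2 * (inner ℝ x ((g : Equiv.Perm (Amb N)).symm 0) : ℝ)
        + ‖x‖ ^ 2 * ‖(g : Equiv.Perm (Amb N)).symm 0‖ ^ 2 := by
    intro g x hx
    rw [hden]
    have hA := hA_pos g
    have hx2 : (0:ℝ) < 1 - ‖x‖ ^ 2 := by nlinarith [norm_nonneg x]
    nlinarith [sq_nonneg ‖x - (g : Equiv.Perm (Amb N)).symm 0‖, mul_pos hx2 hA]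
  have hcζ_pos : ∀ g : G, (0 : ℝ) < cderiv (g : Equiv.Perm (Amb N)) ζ :=
    fun g => div_pos (hA_pos g) (hDζ_pos g)
  -- pointwise convergence
  have hpt : ∀ g : G, Tendsto (fun n => cderiv (g : Equiv.Perm (Amb N)) (z n) ^ s)
      atTop (𝓝 (cderiv (g : Equiv.Perm (Amb N)) ζ ^ s)) := by
    intro g
    set w := (g : Equiv.Perm (Amb N)).symm 0 with hwdef
    have hcont : Continuous fun x : Amb N =>
        1 - 2 * (inner ℝ x w : ℝ) + ‖x‖ ^ 2 * ‖w‖ ^ 2 :=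
      (continuous_const.sub (continuous_const.mul (continuous_id.inner continuous_const))).add
        (((continuous_norm.pow 2)).mul continuous_const)
    have hD : Tendsto (fun n => 1 - 2 * (inner ℝ (z n) w : ℝ) + ‖z n‖ ^ 2 * ‖w‖ ^ 2)
        atTop (𝓝 (1 - 2 * (inner ℝ ζ w : ℝ) + ‖ζ‖ ^ 2 * ‖w‖ ^ 2)) :=
      (hcont.tendsto ζ).comp hlim
    have h0 : (1 - 2 * (inner ℝ ζ w : ℝ) + ‖ζ‖ ^ 2 * ‖w‖ ^ 2) ≠ 0 := (hDζ_pos g).ne'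
    have : Tendsto (fun n => cderiv (g : Equiv.Perm (Amb N)) (z n)) atTop
        (𝓝 (cderiv (g : Equiv.Perm (Amb N)) ζ)) :=
      tendsto_const_nhds.div hD h0
    exact this.rpow_const (Or.inr hs.le)
  -- dominating bound
  have hbound : ∀ᶠ n in atTop, ∀ g : G,
      ‖cderiv (g : Equiv.Perm (Amb N)) (z n) ^ s‖
        ≤ (4 : ℝ) ^ s * cderiv (g : Equiv.Perm (Amb N)) ζ ^ s := by
    have hnz : Tendsto (fun n => ‖z n - ζ‖) atTop (𝓝 0) := by
      have := (hlim.sub (tendsto_const_nhds (x := ζ))).norm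
      simpa using this
    have hsc : (0 : ℝ) < Real.sqrt c / 2 := by positivity
    filter_upwards [hnz.eventually_lt_const hsc] with n hn g
    set w := (g : Equiv.Perm (Amb N)).symm 0 with hwdef
    have hcw : Real.sqrt c ≤ ‖ζ - w‖ := by
      have := Real.sqrt_le_sqrt (hord g g.2)
      rwa [Real.sqrt_sq (norm_nonneg _)] at this
    have htri : ‖ζ - w‖ ≤ ‖ζ - z n‖ + ‖z n - w‖ := norm_sub_le_norm_sub_add_norm_sub ζ (z n) w
    have hzw : ‖ζ - w‖ / 2 ≤ ‖z n - w‖ := by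
      have h1 : ‖ζ - z n‖ < Real.sqrt c / 2 := by rwa [norm_sub_rev]
      linarith
    have hDζ := hDζ_pos g
    have hDz := hDz_pos g (z n) (hz n)
    have hle : cderiv (g : Equiv.Perm (Amb N)) (z n)
        ≤ 4 * cderiv (g : Equiv.Perm (Amb N)) ζ := by
      unfold cderiv
      rw [mul_div_assoc' 4]
      rw [div_le_div_iff₀ hDz hDζ]
      have hq : ‖ζ - w‖ ^ 2 ≤ 4 * ‖z n - w‖ ^ 2 := by nlinarith [norm_nonneg (ζ - w)]
      have hd2 : ‖z n - w‖ ^ 2 ≤ 1 - 2 * (inner ℝ (z n) w : ℝ) + ‖z n‖ ^ 2 * ‖w‖ ^ 2 := by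
        rw [hden]
        have hA := hA_pos g
        have hx2 : (0:ℝ) < 1 - ‖z n‖ ^ 2 := by nlinarith [norm_nonneg (z n), hz n]
        nlinarith [mul_pos hx2 hA]
      have hA := hA_pos g
      rw [show (1 - 2 * (inner ℝ ζ w : ℝ) + ‖ζ‖ ^ 2 * ‖w‖ ^ 2) = ‖ζ - w‖ ^ 2 from hdζ g]
      nlinarith
    have hpos : (0 : ℝ) < cderiv (g : Equiv.Perm (Amb N)) (z n) := div_pos (hA_pos g) hDz
    rw [Real.norm_of_nonneg (Real.rpow_nonneg hpos.le s)]
    calc cderiv (g : Equiv.Perm (Amb N)) (z n) ^ s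
        ≤ (4 * cderiv (g : Equiv.Perm (Amb N)) ζ) ^ s :=
          Real.rpow_le_rpow hpos.le hle hs.le
      _ = (4 : ℝ) ^ s * cderiv (g : Equiv.Perm (Amb N)) ζ ^ s :=
          Real.mul_rpow (by norm_num) (hcζ_pos g).le
  exact tendsto_tsum_of_dominated_convergence (hP.mul_left _) hpt hbound
end
end

section
/- The weak limit μ of the normalized atomic measures μ_n = P(z_n,s)^{-1} Σ_{g∈G} j(g,z_n)^s δ_{g(z_n)} is an s-conformal measure for G: for every g ∈ G and every measurable set A in the closed ball, μ(g(A)) = ∫_A j(g,z)^s dμ(z). Equivalently, for each continuous f on the closed ball and each g ∈ G, ∫ f(g^{-1}(z)) dμ(z) = ∫ f(z) j(g,z)^s dμ(z). -/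
open MeasureTheory Filter
open scoped RealInnerProductSpace ENNReal BigOperators Topology

noncomputable section

namespace Stmt7Aux

variable {N : ℕ}

/-- The radial retraction of the ambient space onto the closed unit ball. -/
def ret (x : Amb N) : Amb N := (max 1 ‖x‖)⁻¹ • x

lemma ret_max_pos (x : Amb N) : (0 : ℝ) < max 1 ‖x‖ :=
  lt_max_of_lt_left one_pos

lemma norm_ret_le (x : Amb N) : ‖ret x‖ ≤ 1 := by
  rw [ret, norm_smul, norm_inv, Real.norm_eq_abs, abs_of_pos (ret_max_pos x),
    inv_mul_eq_div, div_le_one (ret_max_pos x)]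
  exact le_max_right _ _

lemma ret_eq {x : Amb N} (hx : ‖x‖ ≤ 1) : ret x = x := by
  rw [ret, max_eq_left hx, inv_one, one_smul]

lemma continuous_ret : Continuous (ret (N := N)) :=
  (((continuous_const.max continuous_norm).inv₀
    fun x => (ret_max_pos x).ne')).smul continuous_id

lemma mul_norm_le {w z : Amb N} (hz : ‖z‖ ≤ 1) : ‖z‖ * ‖w‖ ≤ ‖w‖ :=
  mul_le_of_le_one_left (norm_nonneg w) hz

lemma denom_lb {w z : Amb N} (hw : ‖w‖ < 1) (hz : ‖z‖ ≤ 1) :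
    (1 - ‖w‖) ^ 2 ≤ 1 - 2 * (inner ℝ z w : ℝ) + ‖z‖ ^ 2 * ‖w‖ ^ 2 := by
  have h := abs_le.mp (abs_real_inner_le_norm z w)
  have ht : ‖z‖ * ‖w‖ ≤ ‖w‖ := mul_norm_le hz
  calc (1 - ‖w‖) ^ 2 ≤ (1 - ‖z‖ * ‖w‖) ^ 2 := by
        apply pow_le_pow_left₀ (by linarith) (by linarith)
    _ ≤ 1 - 2 * (inner ℝ z w : ℝ) + ‖z‖ ^ 2 * ‖w‖ ^ 2 := by nlinarith [h.2]

lemma denom_ub {w z : Amb N} (hw : ‖w‖ < 1) (hz : ‖z‖ ≤ 1) :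
    1 - 2 * (inner ℝ z w : ℝ) + ‖z‖ ^ 2 * ‖w‖ ^ 2 ≤ (1 + ‖w‖) ^ 2 := by
  have h := abs_le.mp (abs_real_inner_le_norm z w)
  have ht : ‖z‖ * ‖w‖ ≤ ‖w‖ := mul_norm_le hz
  calc 1 - 2 * (inner ℝ z w : ℝ) + ‖z‖ ^ 2 * ‖w‖ ^ 2 ≤ (1 + ‖z‖ * ‖w‖) ^ 2 := by
        nlinarith [h.1]
    _ ≤ (1 + ‖w‖) ^ 2 := by
        apply pow_le_pow_left₀ (by positivity) (by linarith)

lemma denom_pos {w z : Amb N} (hw : ‖w‖ < 1) (hz : ‖z‖ ≤ 1) :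
    (0 : ℝ) < 1 - 2 * (inner ℝ z w : ℝ) + ‖z‖ ^ 2 * ‖w‖ ^ 2 :=
  lt_of_lt_of_le (pow_pos (by linarith) 2) (denom_lb hw hz)

lemma num_pos {w : Amb N} (hw : ‖w‖ < 1) : (0 : ℝ) < 1 - ‖w‖ ^ 2 := by
  nlinarith [norm_nonneg w]

lemma cderiv_pos {g : Equiv.Perm (Amb N)} (hw : ‖g.symm 0‖ < 1) {z : Amb N}
    (hz : ‖z‖ ≤ 1) : 0 < cderiv g z :=
  div_pos (num_pos hw) (denom_pos hw hz)

lemma cderiv_le {g : Equiv.Perm (Amb N)} (hw : ‖g.symm 0‖ < 1) {z : Amb N}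
    (hz : ‖z‖ ≤ 1) :
    cderiv g z ≤ (1 - ‖g.symm 0‖ ^ 2) / (1 - ‖g.symm 0‖) ^ 2 := by
  unfold cderiv
  apply div_le_div_of_nonneg_left (num_pos hw).le
  · exact pow_pos (by linarith) 2
  · exact denom_lb hw hz

lemma continuous_cderiv_ret (g : Equiv.Perm (Amb N)) (hw : ‖g.symm 0‖ < 1) :
    Continuous fun x : Amb N => cderiv g (ret x) := by
  unfold cderiv
  apply continuous_const.div
  · exact (continuous_const.sub (continuous_const.mul
      (continuous_ret.inner continuous_const))).add
      (((continuous_ret.norm).pow 2).mul continuous_const)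
  · intro x
    exact (denom_pos hw (norm_ret_le x)).ne'

lemma measurable_cderiv (g : Equiv.Perm (Amb N)) :
    Measurable fun x : Amb N => cderiv g x := by
  unfold cderiv
  apply Measurable.div measurable_const
  exact ((continuous_const.sub (continuous_const.mul
      (continuous_id.inner continuous_const))).add
      (((continuous_norm).pow 2).mul continuous_const)).measurable

end Stmt7Aux

open Stmt7Aux

/-- The weak limit `μ` of the normalized atomic measures
`μ_n = P(z_n,s)⁻¹ Σ_{g∈G} j(g,z_n)^s δ_{g(z_n)}` is an `s`-conformal measure
for `G`: `μ(g(A)) = ∫_A j(g,z)^s dμ` for every `g ∈ G` and measurable `A`;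
equivalently, `∫ f(g⁻¹z) dμ(z) = ∫ f(z) j(g,z)^s dμ(z)` for every bounded
continuous `f` and every `g ∈ G`. -/
theorem stmt_7 {N : ℕ} (G : Subgroup (Equiv.Perm (Amb N)))
    (hmob : ∀ g ∈ G, IsMobius g)
    (hcoc : ∀ g ∈ G, ∀ h ∈ G, ∀ z : Amb N, ‖z‖ ≤ 1 →
      cderiv (g * h) z = cderiv g (h z) * cderiv h z)
    (s : ℝ) (hs : 0 < s)
    (z : ℕ → Amb N) (hz : ∀ n, ‖z n‖ < 1)
    (hsum : ∀ n, Summable fun g : G => cderiv (g : Equiv.Perm (Amb N)) (z n) ^ s)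
    (μ : Measure (Amb N)) [IsProbabilityMeasure μ]
    (hμball : μ {x : Amb N | 1 < ‖x‖} = 0)
    (hweak : ∀ f : BoundedContinuousFunction (Amb N) ℝ,
      Tendsto (fun n =>
          ∫ x, f x ∂((ENNReal.ofReal
              (∑' g : G, cderiv (g : Equiv.Perm (Amb N)) (z n) ^ s))⁻¹ •
            Measure.sum fun g : G =>
              ENNReal.ofReal (cderiv (g : Equiv.Perm (Amb N)) (z n) ^ s) •
                Measure.dirac ((g : Equiv.Perm (Amb N)) (z n))))
        atTop (𝓝 (∫ x, f x ∂μ))) :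
    (∀ g ∈ G, ∀ A : Set (Amb N), MeasurableSet A →
      μ (⇑g '' A) = ∫⁻ x in A, ENNReal.ofReal (cderiv g x ^ s) ∂μ) ∧
    (∀ f : BoundedContinuousFunction (Amb N) ℝ, ∀ g ∈ G,
      ∫ x, f (g.symm x) ∂μ = ∫ x, f x * cderiv g x ^ s ∂μ) := by
  classical
  have hball : ∀ᵐ x ∂μ, ‖x‖ ≤ 1 := by
    rw [ae_iff]
    simpa [not_le] using hμball
  have part2 : ∀ f : BoundedContinuousFunction (Amb N) ℝ, ∀ g ∈ G,
      ∫ x, f (g.symm x) ∂μ = ∫ x, f x * cderiv g x ^ s ∂μ := by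
    intro f g hg
    have hmg := hmob g hg
    have hw : ‖g.symm 0‖ < 1 := by simpa using hmg.symm_maps_open 0 (by simp)
    have hwh : ∀ h : G, ‖(h : Equiv.Perm (Amb N)).symm 0‖ < 1 := fun h => by
      simpa using (hmob _ h.2).symm_maps_open 0 (by simp)
    have htpos : ∀ (n : ℕ) (h : G),
        0 < cderiv (h : Equiv.Perm (Amb N)) (z n) ^ s := fun n h =>
      Real.rpow_pos_of_pos (cderiv_pos (hwh h) (hz n).le) s
    set F₁ : BoundedContinuousFunction (Amb N) ℝ :=
      f.compContinuous ⟨fun x => g.symm (ret x), hmg.continuous_symm.comp continuous_ret⟩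
      with hF₁
    have hF₁x : ∀ x, F₁ x = f (g.symm (ret x)) := fun x => rfl
    have hcont2 : Continuous fun x : Amb N => f (ret x) * cderiv g (ret x) ^ s :=
      (f.continuous.comp continuous_ret).mul
        ((continuous_cderiv_ret g hw).rpow_const fun x => Or.inr hs.le)
    have hbd2 : ∀ x : Amb N, ‖f (ret x) * cderiv g (ret x) ^ s‖ ≤
        ‖f‖ * ((1 - ‖g.symm 0‖ ^ 2) / (1 - ‖g.symm 0‖) ^ 2) ^ s := by
      intro x
      rw [norm_mul]
      apply mul_le_mul (f.norm_coe_le_norm _) ?_ (norm_nonneg _) (norm_nonneg f)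
      rw [Real.norm_eq_abs,
        abs_of_nonneg (Real.rpow_nonneg (cderiv_pos hw (norm_ret_le x)).le s)]
      exact Real.rpow_le_rpow (cderiv_pos hw (norm_ret_le x)).le
        (cderiv_le hw (norm_ret_le x)) hs.le
    set F₂ : BoundedContinuousFunction (Amb N) ℝ :=
      BoundedContinuousFunction.ofNormedAddCommGroup _ hcont2 _ hbd2 with hF₂
    have hF₂x : ∀ x, F₂ x = f (ret x) * cderiv g (ret x) ^ s := fun x => rfl
    have hfin : ∀ n : ℕ, IsFiniteMeasure (Measure.sum fun h : G =>
        ENNReal.ofReal (cderiv (h : Equiv.Perm (Amb N)) (z n) ^ s) •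
          Measure.dirac ((h : Equiv.Perm (Amb N)) (z n))) := by
      intro n
      constructor
      rw [Measure.sum_apply _ MeasurableSet.univ]
      have huniv : ∀ h : G, (ENNReal.ofReal (cderiv (h : Equiv.Perm (Amb N)) (z n) ^ s) •
          Measure.dirac ((h : Equiv.Perm (Amb N)) (z n))) Set.univ
          = ENNReal.ofReal (cderiv (h : Equiv.Perm (Amb N)) (z n) ^ s) := by
        intro h; simp
      rw [tsum_congr huniv,
        ← ENNReal.ofReal_tsum_of_nonneg (fun h => (htpos n h).le) (hsum n)]
      exact ENNReal.ofReal_lt_top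
    have key : ∀ (n : ℕ) (F : BoundedContinuousFunction (Amb N) ℝ),
        (∫ x, F x ∂((ENNReal.ofReal
              (∑' h : G, cderiv (h : Equiv.Perm (Amb N)) (z n) ^ s))⁻¹ •
            Measure.sum fun h : G =>
              ENNReal.ofReal (cderiv (h : Equiv.Perm (Amb N)) (z n) ^ s) •
                Measure.dirac ((h : Equiv.Perm (Amb N)) (z n))))
        = ((ENNReal.ofReal
              (∑' h : G, cderiv (h : Equiv.Perm (Amb N)) (z n) ^ s))⁻¹).toReal *
            ∑' h : G, cderiv (h : Equiv.Perm (Amb N)) (z n) ^ s *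
              F ((h : Equiv.Perm (Amb N)) (z n)) := by
      intro n F
      haveI := hfin n
      rw [integral_smul_measure, integral_sum_measure (F.integrable _), smul_eq_mul]
      congr 1
      apply tsum_congr
      intro h
      rw [integral_smul_measure, integral_dirac, smul_eq_mul,
        ENNReal.toReal_ofReal (htpos n h).le]
    have hEq : ∀ n : ℕ,
        (∑' h : G, cderiv (h : Equiv.Perm (Amb N)) (z n) ^ s *
          F₁ ((h : Equiv.Perm (Amb N)) (z n)))
        = ∑' h : G, cderiv (h : Equiv.Perm (Amb N)) (z n) ^ s *
          F₂ ((h : Equiv.Perm (Amb N)) (z n)) := by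
      intro n
      rw [← Equiv.tsum_eq (Equiv.mulLeft (⟨g, hg⟩ : G)) (fun h : G =>
        cderiv (h : Equiv.Perm (Amb N)) (z n) ^ s * F₁ ((h : Equiv.Perm (Amb N)) (z n)))]
      apply tsum_congr
      intro h
      simp only [Equiv.coe_mulLeft]
      have hx : ‖(h : Equiv.Perm (Amb N)) (z n)‖ < 1 := (hmob _ h.2).maps_open _ (hz n)
      have hgx : ‖g ((h : Equiv.Perm (Amb N)) (z n))‖ < 1 := hmg.maps_open _ hx
      have e0 : (((⟨g, hg⟩ : G) * h : G) : Equiv.Perm (Amb N))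
          = g * (h : Equiv.Perm (Amb N)) := rfl
      have e1 : (((⟨g, hg⟩ : G) * h : G) : Equiv.Perm (Amb N)) (z n)
          = g ((h : Equiv.Perm (Amb N)) (z n)) := rfl
      have e2 : cderiv (((⟨g, hg⟩ : G) * h : G) : Equiv.Perm (Amb N)) (z n)
          = cderiv g ((h : Equiv.Perm (Amb N)) (z n)) *
              cderiv (h : Equiv.Perm (Amb N)) (z n) := by
        rw [e0, hcoc g hg _ h.2 (z n) (hz n).le]
      rw [e1, e2, hF₁x, hF₂x, ret_eq hgx.le, ret_eq hx.le, Equiv.symm_apply_apply,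
        Real.mul_rpow (cderiv_pos hw hx.le).le (cderiv_pos (hwh h) (hz n).le).le]
      ring
    have hlim : ∫ x, F₁ x ∂μ = ∫ x, F₂ x ∂μ := by
      refine tendsto_nhds_unique (hweak F₁) ((hweak F₂).congr fun n => ?_)
      rw [key n F₂, key n F₁, hEq n]
    have hae1 : ∫ x, F₁ x ∂μ = ∫ x, f (g.symm x) ∂μ := by
      apply integral_congr_ae
      filter_upwards [hball] with x hx
      rw [hF₁x x, ret_eq hx]
    have hae2 : ∫ x, F₂ x ∂μ = ∫ x, f x * cderiv g x ^ s ∂μ := by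
      apply integral_congr_ae
      filter_upwards [hball] with x hx
      rw [hF₂x x, ret_eq hx]
    rw [← hae1, ← hae2, hlim]
  refine ⟨?_, part2⟩
  intro g hg A hA
  have hmg := hmob g hg
  have hw : ‖g.symm 0‖ < 1 := by simpa using hmg.symm_maps_open 0 (by simp)
  have hmeass : Measurable (⇑g.symm) := hmg.continuous_symm.measurable
  have hdm : Measurable fun x : Amb N => (cderiv g x ^ s).toNNReal :=
    (((Real.continuous_rpow_const hs.le).measurable.comp
      (measurable_cderiv g))).real_toNNReal
  set ν₁ : Measure (Amb N) := μ.map (⇑g.symm) with hν₁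
  set ν₂ : Measure (Amb N) :=
    μ.withDensity (fun x => ENNReal.ofReal (cderiv g x ^ s)) with hν₂
  haveI : IsFiniteMeasure ν₂ := by
    constructor
    rw [hν₂, withDensity_apply _ MeasurableSet.univ, Measure.restrict_univ]
    calc ∫⁻ x, ENNReal.ofReal (cderiv g x ^ s) ∂μ
        ≤ ∫⁻ _, ENNReal.ofReal
            (((1 - ‖g.symm 0‖ ^ 2) / (1 - ‖g.symm 0‖) ^ 2) ^ s) ∂μ := by
          apply lintegral_mono_ae
          filter_upwards [hball] with x hx
          exact ENNReal.ofReal_le_ofReal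
            (Real.rpow_le_rpow (cderiv_pos hw hx).le (cderiv_le hw hx) hs.le)
      _ < ⊤ := by
          rw [lintegral_const]
          exact ENNReal.mul_lt_top ENNReal.ofReal_lt_top (measure_lt_top μ _)
  have hmain : ν₁ = ν₂ := by
    apply ext_of_forall_lintegral_eq_of_IsFiniteMeasure
    intro fNN
    set fR : BoundedContinuousFunction (Amb N) ℝ :=
      BoundedContinuousFunction.ofNormedAddCommGroup (fun x => (fNN x : ℝ))
        (NNReal.continuous_coe.comp fNN.continuous) ((nndist 0 fNN) : ℝ)
        (fun x => by
          rw [Real.norm_eq_abs, abs_of_nonneg (fNN x).coe_nonneg]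
          exact_mod_cast fNN.apply_le_nndist_zero x) with hfR
    have hfRx : ∀ x, fR x = (fNN x : ℝ) := fun x => rfl
    have h2 := part2 fR g hg
    have hL : (∫⁻ x, (fNN x : ℝ≥0∞) ∂ν₁).toReal = ∫ x, fR (g.symm x) ∂μ := by
      rw [BoundedContinuousFunction.toReal_lintegral_coe_eq_integral fNN ν₁, hν₁,
        integral_map hmeass.aemeasurable
          (show Continuous fun y : Amb N => ((fNN y : ℝ)) from
            NNReal.continuous_coe.comp fNN.continuous).aestronglyMeasurable]
      rfl
    have hRR : (∫⁻ x, (fNN x : ℝ≥0∞) ∂ν₂).toReal = ∫ x, fR x * cderiv g x ^ s ∂μ := by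
      rw [BoundedContinuousFunction.toReal_lintegral_coe_eq_integral fNN ν₂, hν₂]
      have hwd : μ.withDensity (fun x => ENNReal.ofReal (cderiv g x ^ s))
          = μ.withDensity (fun x => ((cderiv g x ^ s).toNNReal : ℝ≥0∞)) := rfl
      rw [hwd, integral_withDensity_eq_integral_smul hdm]
      apply integral_congr_ae
      filter_upwards [hball] with x hx
      rw [NNReal.smul_def, smul_eq_mul,
        Real.coe_toNNReal _ (Real.rpow_nonneg (cderiv_pos hw hx).le s), mul_comm]
      rfl
    have hLfin := BoundedContinuousFunction.lintegral_lt_top_of_nnreal ν₁ fNN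
    have hRfin := BoundedContinuousFunction.lintegral_lt_top_of_nnreal ν₂ fNN
    exact (ENNReal.toReal_eq_toReal_iff' hLfin.ne hRfin.ne).mp (hL.trans (h2.trans hRR.symm))
  calc μ (⇑g '' A) = ν₁ A := by
        rw [Equiv.image_eq_preimage_symm, hν₁, Measure.map_apply hmeass hA]
    _ = ν₂ A := by rw [hmain]
    _ = ∫⁻ x in A, ENNReal.ofReal (cderiv g x ^ s) ∂μ := withDensity_apply _ hA
end
end

section
/- Suppose a Kleinian group G acts dissipatively on a G-invariant measurable set A with measurable fundamental set E (so E meets each orbit in A in exactly one point), μ is an s-conformal probability measure for G, and E_n := {ζ ∈ E : #Stab_G(ζ) ≤ n} has μ(E_n) > 0 for some n. Then Σ_{g∈G} μ(g(E_n)) ≤ n, hence ∫_{E_n} P(ζ,s) dμ(ζ) ≤ n where P(ζ,s) = Σ_{g∈G} j(g,ζ)^s, and therefore P(ζ,s) < ∞ for μ-almost every ζ ∈ E_n. -/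
open MeasureTheory Filter
open scoped RealInnerProductSpace ENNReal BigOperators Topology

noncomputable section

/-- Suppose the Kleinian group `G` acts dissipatively on a
`G`-invariant set `A` with measurable fundamental set `E` (meeting each orbit
in `A` exactly once), `μ` is an `s`-conformal probability measure for `G`, and
`E_n = {ζ ∈ E : #Stab_G(ζ) ≤ n}` has `μ(E_n) > 0`.  Then
`Σ_{g∈G} μ(g(E_n)) ≤ n`, hence `∫_{E_n} P(ζ,s) dμ(ζ) ≤ n` where
`P(ζ,s) = Σ_{g∈G} j(g,ζ)^s`, and therefore `P(ζ,s) < ∞` for `μ`-a.e.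
`ζ ∈ E_n`. -/
theorem stmt_15 {N : ℕ} (G : Subgroup (Equiv.Perm (Amb N))) [Countable ↥G]
    (hmob : ∀ g ∈ G, IsMobius g) (s : ℝ) (hs : 0 < s)
    (μ : Measure (Amb N)) [IsProbabilityMeasure μ]
    (hconf : ∀ g ∈ G, ∀ A' : Set (Amb N), MeasurableSet A' →
      μ (⇑g '' A') = ∫⁻ x in A', ENNReal.ofReal (cderiv g x ^ s) ∂μ)
    (A E : Set (Amb N)) (hEA : E ⊆ A) (hE : MeasurableSet E)
    (hAinv : ∀ g ∈ G, ⇑g '' A = A)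
    (hfund : ∀ a ∈ A, ∃! e, e ∈ E ∧ ∃ g ∈ G, g a = e)
    (n : ℕ) (En : Set (Amb N))
    (hEn : En = {x ∈ E |
      ({g : ↥G | (g : Equiv.Perm (Amb N)) x = x}).Finite ∧
      Nat.card {g : ↥G | (g : Equiv.Perm (Amb N)) x = x} ≤ n})
    (hmeasEn : MeasurableSet En) (hpos : 0 < μ En) :
    (∑' g : G, μ (⇑(g : Equiv.Perm (Amb N)) '' En)) ≤ (n : ℝ≥0∞) ∧
    (∫⁻ x in En,
        ∑' g : G, ENNReal.ofReal (cderiv (g : Equiv.Perm (Amb N)) x ^ s) ∂μ) ≤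
      (n : ℝ≥0∞) ∧
    (∀ᵐ x ∂(μ.restrict En),
      (∑' g : G, ENNReal.ofReal (cderiv (g : Equiv.Perm (Amb N)) x ^ s)) < ⊤) := by
  classical
  have hEnE : En ⊆ E := by rw [hEn]; exact fun x hx => hx.1
  -- measurability of images
  have himg : ∀ g : ↥G, MeasurableSet (⇑(g : Equiv.Perm (Amb N)) '' En) := by
    intro g
    rw [Equiv.image_eq_preimage_symm]
    exact hmeasEn.preimage (hmob g g.2).continuous_symm.measurable
  -- multiplicity bound: each point lies in at most n of the sets g(En)
  have hmul : ∀ x : Amb N,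
      (∑' g : ↥G,
        (⇑(g : Equiv.Perm (Amb N)) '' En).indicator (fun _ => (1 : ℝ≥0∞)) x) ≤ n := by
    intro x
    by_cases hx : ∃ g : ↥G, x ∈ ⇑(g : Equiv.Perm (Amb N)) '' En
    · obtain ⟨g₀, e, heEn, hge⟩ := hx
      have heA : e ∈ A := hEA (hEnE heEn)
      have hxA : x ∈ A := by
        rw [← hAinv g₀ g₀.2]; exact ⟨e, heA, hge⟩
      obtain ⟨e₁, he₁, huniq⟩ := hfund x hxA
      have hkey : ∀ g : ↥G, x ∈ ⇑(g : Equiv.Perm (Amb N)) '' En →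
          (g : Equiv.Perm (Amb N)).symm x ∈ En ∧
            (g : Equiv.Perm (Amb N)).symm x = e₁ := by
        rintro g ⟨e', he', hge'⟩
        have hsymm : (g : Equiv.Perm (Amb N)).symm x = e' := by
          rw [← hge']; exact (g : Equiv.Perm (Amb N)).symm_apply_apply e'
        refine ⟨hsymm ▸ he', ?_⟩
        rw [hsymm]
        refine huniq e' ⟨hEnE he', ⟨((g⁻¹ : ↥G) : Equiv.Perm (Amb N)),
          (g⁻¹ : ↥G).2, ?_⟩⟩
        simp only [InvMemClass.coe_inv]
        rw [Equiv.Perm.inv_def, hsymm]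
      have he₁En : e₁ ∈ En := by
        have := hkey g₀ ⟨e, heEn, hge⟩
        rw [← this.2]; exact this.1
      have he₁x : (g₀ : Equiv.Perm (Amb N)).symm x = e₁ := (hkey g₀ ⟨e, heEn, hge⟩).2
      -- the stabilizer of e₁
      have hstab := (hEn ▸ he₁En).2
      obtain ⟨hfin, hcard⟩ := hstab
      have hcard' : hfin.toFinset.card ≤ n := by
        rwa [Nat.card_coe_set_eq, Set.ncard_eq_toFinset_card _ hfin] at hcard
      rw [ENNReal.tsum_eq_iSup_sum]
      refine iSup_le fun F => ?_
      have : (∑ g ∈ F,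
          (⇑(g : Equiv.Perm (Amb N)) '' En).indicator (fun _ => (1 : ℝ≥0∞)) x)
          = ((F.filter fun g : ↥G => x ∈ ⇑(g : Equiv.Perm (Amb N)) '' En).card : ℝ≥0∞) := by
        rw [← Finset.sum_boole]
        exact Finset.sum_congr rfl fun g _ => by
          simp [Set.indicator_apply]
      rw [this]
      have hle : (F.filter fun g : ↥G => x ∈ ⇑(g : Equiv.Perm (Amb N)) '' En).card ≤ n := by
        refine le_trans (Finset.card_le_card_of_injOn (fun g => g₀⁻¹ * g) ?_ ?_) hcard'
        · intro g hg
          rw [Finset.mem_coe, Finset.mem_filter] at hg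
          have h1 : (g : Equiv.Perm (Amb N)).symm x = e₁ := (hkey g hg.2).2
          have h2 : (g : Equiv.Perm (Amb N)) e₁ = x := by
            rw [← h1]; exact (g : Equiv.Perm (Amb N)).apply_symm_apply x
          rw [Finset.mem_coe, Set.Finite.mem_toFinset]
          show ((g₀⁻¹ * g : ↥G) : Equiv.Perm (Amb N)) e₁ = e₁
          simp only [Subgroup.coe_mul, InvMemClass.coe_inv, Equiv.Perm.mul_apply, h2,
            Equiv.Perm.inv_def]
          exact he₁x
        · intro a _ b _ hab
          exact mul_left_cancel hab
      exact_mod_cast hle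
    · push_neg at hx
      have : ∀ g : ↥G,
          (⇑(g : Equiv.Perm (Amb N)) '' En).indicator (fun _ => (1 : ℝ≥0∞)) x = 0 :=
        fun g => Set.indicator_of_notMem (hx g) _
      simp [this]
  -- first conclusion
  have hC : (∑' g : ↥G, μ (⇑(g : Equiv.Perm (Amb N)) '' En)) ≤ (n : ℝ≥0∞) := by
    have heq : ∀ g : ↥G, μ (⇑(g : Equiv.Perm (Amb N)) '' En)
        = ∫⁻ x, (⇑(g : Equiv.Perm (Amb N)) '' En).indicator (fun _ => (1 : ℝ≥0∞)) x ∂μ := by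
      intro g
      exact (lintegral_indicator_one (himg g)).symm
    calc (∑' g : ↥G, μ (⇑(g : Equiv.Perm (Amb N)) '' En))
        = ∑' g : ↥G, ∫⁻ x,
            (⇑(g : Equiv.Perm (Amb N)) '' En).indicator (fun _ => (1 : ℝ≥0∞)) x ∂μ :=
          tsum_congr heq
      _ = ∫⁻ x, ∑' g : ↥G,
            (⇑(g : Equiv.Perm (Amb N)) '' En).indicator (fun _ => (1 : ℝ≥0∞)) x ∂μ :=
          (lintegral_tsum fun g =>
            ((measurable_const.indicator (himg g)).aemeasurable)).symm
      _ ≤ ∫⁻ _, (n : ℝ≥0∞) ∂μ := lintegral_mono fun x => hmul x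
      _ = (n : ℝ≥0∞) := by simp
  -- measurability of the conformal densities
  have hmeascd : ∀ g : ↥G,
      Measurable fun x : Amb N =>
        ENNReal.ofReal (cderiv (g : Equiv.Perm (Amb N)) x ^ s) := by
    intro g
    apply Measurable.ennreal_ofReal
    apply Measurable.pow _ measurable_const
    unfold cderiv
    apply Measurable.div measurable_const
    have : Continuous fun z : Amb N =>
        1 - 2 * (inner ℝ z ((g : Equiv.Perm (Amb N)).symm 0) : ℝ)
          + ‖z‖ ^ 2 * ‖(g : Equiv.Perm (Amb N)).symm 0‖ ^ 2 := by
      apply Continuous.add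
      · exact continuous_const.sub (continuous_const.mul
          (continuous_id.inner continuous_const))
      · exact (continuous_norm.pow 2).mul continuous_const
    exact this.measurable
  -- second conclusion
  have hD : (∫⁻ x in En,
      ∑' g : ↥G, ENNReal.ofReal (cderiv (g : Equiv.Perm (Amb N)) x ^ s) ∂μ)
      ≤ (n : ℝ≥0∞) := by
    rw [lintegral_tsum fun g => (hmeascd g).aemeasurable]
    calc (∑' g : ↥G, ∫⁻ x in En,
          ENNReal.ofReal (cderiv (g : Equiv.Perm (Amb N)) x ^ s) ∂μ)
        = ∑' g : ↥G, μ (⇑(g : Equiv.Perm (Amb N)) '' En) :=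
          tsum_congr fun g => (hconf g g.2 En hmeasEn).symm
      _ ≤ (n : ℝ≥0∞) := hC
  refine ⟨hC, hD, ?_⟩
  have hmeas : Measurable fun x : Amb N =>
      ∑' g : ↥G, ENNReal.ofReal (cderiv (g : Equiv.Perm (Amb N)) x ^ s) :=
    Measurable.ennreal_tsum hmeascd
  exact ae_lt_top hmeas (lt_of_le_of_lt hD (ENNReal.natCast_lt_top n)).ne
end
end

section
/- Let μ be an s-conformal measure for a Kleinian group G and suppose ζ is a boundary point such that there exist c > 0 and infinitely many g ∈ G with j(g,ζ) > c and the points g(ζ) pairwise distinct (e.g. Stab_G(ζ) finite and the orbit of 0 under G^{-1} accumulating at ζ inside a horoball). Then μ({ζ}) = 0. -/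
open MeasureTheory Filter
open scoped RealInnerProductSpace ENNReal BigOperators Topology

noncomputable section

/-- Let `μ` be a finite `s`-conformal measure for the
Kleinian group `G` and `ζ` a boundary point such that for some `c > 0` there
are infinitely many `g ∈ G` (an injective sequence of orbit points `g(ζ)`) with
`j(g,ζ) > c`.  Then `μ({ζ}) = 0`. -/
theorem stmt_19 {N : ℕ} (G : Subgroup (Equiv.Perm (Amb N)))
    (hmob : ∀ g ∈ G, IsMobius g) (s : ℝ) (hs : 0 < s)
    (ζ : Amb N) (hζ : ‖ζ‖ = 1) (c : ℝ) (hc : 0 < c)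
    (μ : Measure (Amb N)) [IsFiniteMeasure μ]
    (hconf : ∀ g ∈ G,
      μ {g ζ} = ENNReal.ofReal (cderiv g ζ ^ s) * μ {ζ})
    (hinf : ∃ f : ℕ → Equiv.Perm (Amb N), (∀ i, f i ∈ G) ∧
      Function.Injective (fun i => f i ζ) ∧ ∀ i, c < cderiv (f i) ζ) :
    μ {ζ} = 0 := by
  by_contra hμ
  obtain ⟨f, hfG, hfinj, hfc⟩ := hinf
  set ε : ℝ≥0∞ := ENNReal.ofReal (c ^ s) * μ {ζ} with hε
  have hεne : ε ≠ 0 := by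
    exact mul_ne_zero (ENNReal.ofReal_pos.mpr (Real.rpow_pos_of_pos hc s)).ne' hμ
  have hle : ∀ i, ε ≤ μ {f i ζ} := by
    intro i
    rw [hconf _ (hfG i)]
    refine mul_le_mul_left (ENNReal.ofReal_le_ofReal ?_) _
    exact Real.rpow_le_rpow hc.le (hfc i).le hs.le
  have hdisj : Pairwise (Function.onFun Disjoint fun i => ({f i ζ} : Set (Amb N))) := by
    intro i j hij
    simpa [Function.onFun, Set.disjoint_singleton] using fun h => hij (hfinj h)
  have hmeas : μ (⋃ i, ({f i ζ} : Set (Amb N))) = ∑' i, μ {f i ζ} :=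
    measure_iUnion hdisj fun i => measurableSet_singleton _
  have htop : (⊤ : ℝ≥0∞) ≤ μ (⋃ i, ({f i ζ} : Set (Amb N))) := by
    rw [hmeas]
    calc (⊤ : ℝ≥0∞) = ∑' _ : ℕ, ε := (ENNReal.tsum_const_eq_top_of_ne_zero hεne).symm
    _ ≤ ∑' i, μ {f i ζ} := ENNReal.tsum_le_tsum hle
  exact (measure_ne_top μ _) (top_le_iff.mp htop)
end
end
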